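/- Let λ be the unique real root of x³ − x² − 2x − 4 and let φ = (1 + √5)/2. Then there exists a unique real number D > 0 such that λ · ((λ − 2) · φ^(−D) + ((λ² − 4)/λ²) · φ^(−2·D) + ((λ − 2)/λ) · φ^(−D)) = 1, and this D satisfies 1.478 < D < 1.4782. -/

import Mathlib

set_option maxHeartbeats 4000000 in
/-- Let `l` be the (unique) real root of `x³ − x² − 2x − 4` and
`φ = (1 + √5)/2`. Then there is a unique `D > 0` with
`l · ((l − 2) φ^(−D) + ((l² − 4)/l²) φ^(−2D) + ((l − 2)/l) φ^(−D)) = 1`,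
and this `D` satisfies `1.478 < D < 1.4782`. -/
theorem stmt_12 (l : ℝ) (hl : l ^ 3 - l ^ 2 - 2 * l - 4 = 0) :
    let φ : ℝ := (1 + Real.sqrt 5) / 2
    (∃! D : ℝ, 0 < D ∧
      l * ((l - 2) * φ ^ (-D) + ((l ^ 2 - 4) / l ^ 2) * φ ^ (-(2 * D)) +
        ((l - 2) / l) * φ ^ (-D)) = 1) ∧
    ∀ D : ℝ, 0 < D →
      l * ((l - 2) * φ ^ (-D) + ((l ^ 2 - 4) / l ^ 2) * φ ^ (-(2 * D)) +
        ((l - 2) / l) * φ ^ (-D)) = 1 →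
      1.478 < D ∧ D < 1.4782 := by
  intro φ
  have hφdef : φ = (1 + Real.sqrt 5) / 2 := rfl
  clear_value φ
  have h5 : Real.sqrt 5 ^ 2 = 5 := Real.sq_sqrt (by norm_num)
  have hs5pos : 0 < Real.sqrt 5 := Real.sqrt_pos.2 (by norm_num)
  have hsA : Real.sqrt 5 < 2.2360679775 := by
    nlinarith [h5, hs5pos]
  have hsB : (2.2360679774 : ℝ) < Real.sqrt 5 := by
    nlinarith [h5, hs5pos]
  have hφub : φ < 1.61803398875 := by rw [hφdef]; linarith
  have hφlb : (1.6180339887 : ℝ) < φ := by rw [hφdef]; linarith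
  have hφ1 : (1:ℝ) < φ := by linarith
  have hφ0 : (0:ℝ) < φ := by linarith
  have hsq : φ ^ 2 = φ + 1 := by rw [hφdef]; linear_combination h5 / 4
  -- bounds on l
  have hl1 : (2.46750385 : ℝ) < l := by
    nlinarith [hl, sq_nonneg (l + 1), sq_nonneg l, sq_nonneg (l - 1), sq_nonneg (2*l + 1.4675)]
  have hl2 : l < 2.46750386 := by
    nlinarith [hl, sq_nonneg (l + 1), sq_nonneg l, sq_nonneg (l - 1), sq_nonneg (l - 2.46750386)]
  have hl0 : (0:ℝ) < l := by linarith
  -- Fibonacci chain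
  have hp1 : φ ^ 1 = 1 * φ + 0 := by ring
  have hp2 : φ ^ 2 = 1 * φ + 1 := by linear_combination (φ ^ 1 + 1 * φ + 0) * hp1 + (1:ℝ)^2 * hsq
  have hp4 : φ ^ 4 = 3 * φ + 2 := by linear_combination (φ ^ 2 + 1 * φ + 1) * hp2 + (1:ℝ)^2 * hsq
  have hp8 : φ ^ 8 = 21 * φ + 13 := by linear_combination (φ ^ 4 + 3 * φ + 2) * hp4 + (3:ℝ)^2 * hsq
  have hp16 : φ ^ 16 = 987 * φ + 610 := by linear_combination (φ ^ 8 + 21 * φ + 13) * hp8 + (21:ℝ)^2 * hsq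
  have hp32 : φ ^ 32 = 2178309 * φ + 1346269 := by linear_combination (φ ^ 16 + 987 * φ + 610) * hp16 + (987:ℝ)^2 * hsq
  have hp33 : φ ^ 33 = 3524578 * φ + 2178309 := by linear_combination φ * hp32 + (2178309:ℝ) * hsq
  have hp66 : φ ^ 66 = 27777890035288 * φ + 17167680177565 := by linear_combination (φ ^ 33 + 3524578 * φ + 2178309) * hp33 + (3524578:ℝ)^2 * hsq
  have hp67 : φ ^ 67 = 44945570212853 * φ + 27777890035288 := by linear_combination φ * hp66 + (27777890035288:ℝ) * hsq
  have hp134 : φ ^ 134 = 4517090495650391871408712937 * φ + 2791715456571051233611642553 := by linear_combination (φ ^ 67 + 44945570212853 * φ + 27777890035288) * hp67 + (44945570212853:ℝ)^2 * hsq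
  have hp268 : φ ^ 268 = 45624969256769882625644229676772632057353264935332782291 * φ + 28197781736352815952563206467131172508227658829511523778 := by linear_combination (φ ^ 134 + 4517090495650391871408712937 * φ + 2791715456571051233611642553) * hp134 + (4517090495650391871408712937:ℝ)^2 * hsq
  have hp269 : φ ^ 269 = 73822750993122698578207436143903804565580923764844306069 * φ + 45624969256769882625644229676772632057353264935332782291 := by linear_combination φ * hp268 + (45624969256769882625644229676772632057353264935332782291:ℝ) * hsq
  have hp64 : φ ^ 64 = 10610209857723 * φ + 6557470319842 := by linear_combination (φ ^ 32 + 2178309 * φ + 1346269) * hp32 + (2178309:ℝ)^2 * hsq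
  have hp65 : φ ^ 65 = 17167680177565 * φ + 10610209857723 := by linear_combination φ * hp64 + (10610209857723:ℝ) * hsq
  have hp130 : φ ^ 130 = 659034621587630041982498215 * φ + 407305795904080553832073954 := by linear_combination (φ ^ 65 + 17167680177565 * φ + 10610209857723) * hp65 + (17167680177565:ℝ)^2 * hsq
  have hp131 : φ ^ 131 = 1066340417491710595814572169 * φ + 659034621587630041982498215 := by linear_combination φ * hp130 + (659034621587630041982498215:ℝ) * hsq
  have hp262 : φ ^ 262 = 2542592393026885507715496646813780220945054040571721231 * φ + 1571408518427546378167846658524186148133445300987550786 := by linear_combination (φ ^ 131 + 1066340417491710595814572169 * φ + 659034621587630041982498215) * hp131 + (1066340417491710595814572169:ℝ)^2 * hsq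
  have hp524 : φ ^ 524 = 14455678767661239941060750283349851372786616456634781515481577509301997444983826731071749118079998628070030493 * φ + 8934100808864840588968254846666500774662240852478275476653257837732021606120081759175720837328779800905373157 := by linear_combination (φ ^ 262 + 2542592393026885507715496646813780220945054040571721231 * φ + 1571408518427546378167846658524186148133445300987550786) * hp262 + (2542592393026885507715496646813780220945054040571721231:ℝ)^2 * hsq
  have hp525 : φ ^ 525 = 23389779576526080530029005130016352147448857309113056992134835347034019051103908490247469955408778428975403650 * φ + 14455678767661239941060750283349851372786616456634781515481577509301997444983826731071749118079998628070030493 := by linear_combination φ * hp524 + (14455678767661239941060750283349851372786616456634781515481577509301997444983826731071749118079998628070030493:ℝ) * hsq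
  have hp1050 : φ ^ 1050 = 1223312068647805695866041001606414215425662481984418699889280184734522565471193888244259842002003203662301235495264496143544059342859868972795832692060911690562863420044109984978877398486541422811217041686547085400321400 * φ + 756048437272288539690689795395260379730144585449845974339332918940173917152358791856341578591446769958919540638977087283361050810001659571116800529701043980611605511244669373657331212851990485445068045097568158383145549 := by linear_combination (φ ^ 525 + 23389779576526080530029005130016352147448857309113056992134835347034019051103908490247469955408778428975403650 * φ + 14455678767661239941060750283349851372786616456634781515481577509301997444983826731071749118079998628070030493) * hp525 + (23389779576526080530029005130016352147448857309113056992134835347034019051103908490247469955408778428975403650:ℝ)^2 * hsq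
  have hp1051 : φ ^ 1051 = 1979360505920094235556730797001674595155807067434264674228613103674696482623552680100601420593449973621220776134241583426905110152861528543912633221761955671174468931288779358636208611338531908256285086784115243783466949 * φ + 1223312068647805695866041001606414215425662481984418699889280184734522565471193888244259842002003203662301235495264496143544059342859868972795832692060911690562863420044109984978877398486541422811217041686547085400321400 := by linear_combination φ * hp1050 + (1223312068647805695866041001606414215425662481984418699889280184734522565471193888244259842002003203662301235495264496143544059342859868972795832692060911690562863420044109984978877398486541422811217041686547085400321400:ℝ) * hsq
  -- rpow bounds
  have hE1 : φ ^ ((269 : ℝ)/182) < (50913/25000 : ℝ) := by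
    refine lt_of_pow_lt_pow_left₀ 182 (by norm_num) ?_
    have hx : (φ ^ ((269 : ℝ)/182)) ^ (182:ℕ) = φ ^ (269:ℕ) := by
      rw [← Real.rpow_natCast (φ ^ ((269 : ℝ)/182)) 182, ← Real.rpow_mul hφ0.le,
        ← Real.rpow_natCast φ 269]
      norm_num
    rw [hx, hp269]
    have h1 : (73822750993122698578207436143903804565580923764844306069 : ℝ) * φ < (73822750993122698578207436143903804565580923764844306069 : ℝ) * 1.61803398875 :=
      mul_lt_mul_of_pos_left hφub (by norm_num)
    have h2 : (73822750993122698578207436143903804565580923764844306069 : ℝ) * 1.61803398875 + 45624969256769882625644229676772632057353264935332782291 ≤ (50913/25000 : ℝ) ^ (182:ℕ) := by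
      norm_num
    linarith
  have hE2 : (814677/400000 : ℝ) < φ ^ ((1051 : ℝ)/711) := by
    refine lt_of_pow_lt_pow_left₀ 711 (Real.rpow_pos_of_pos hφ0 _).le ?_
    have hx : (φ ^ ((1051 : ℝ)/711)) ^ (711:ℕ) = φ ^ (1051:ℕ) := by
      rw [← Real.rpow_natCast (φ ^ ((1051 : ℝ)/711)) 711, ← Real.rpow_mul hφ0.le,
        ← Real.rpow_natCast φ 1051]
      norm_num
    rw [hx, hp1051]
    have h1 : (1979360505920094235556730797001674595155807067434264674228613103674696482623552680100601420593449973621220776134241583426905110152861528543912633221761955671174468931288779358636208611338531908256285086784115243783466949 : ℝ) * 1.6180339887 < (1979360505920094235556730797001674595155807067434264674228613103674696482623552680100601420593449973621220776134241583426905110152861528543912633221761955671174468931288779358636208611338531908256285086784115243783466949 : ℝ) * φ :=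
      mul_lt_mul_of_pos_left hφlb (by norm_num)
    have h2 : (814677/400000 : ℝ) ^ (711:ℕ) ≤ (1979360505920094235556730797001674595155807067434264674228613103674696482623552680100601420593449973621220776134241583426905110152861528543912633221761955671174468931288779358636208611338531908256285086784115243783466949 : ℝ) * 1.6180339887 + 1223312068647805695866041001606414215425662481984418699889280184734522565471193888244259842002003203662301235495264496143544059342859868972795832692060911690562863420044109984978877398486541422811217041686547085400321400 := by
      rw [div_pow]; norm_num
      rw [div_le_div_iff₀ (by positivity) (by positivity)]
      have key : (814677 ^ 711 * 10000000000 : ℕ) ≤ 44259846431169457353037754982111637612050706892727318457829091405423783425124410717920110758337093855745548708670611720251831496199072747214816937281885404671058749985415198821872498101359142523293564625001747290997573066050894763 * 400000 ^ 711 := by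
        set_option maxRecDepth 100000 in decide
      exact_mod_cast key
    exact lt_of_le_of_lt h2 (by linarith [h1])
  have ht1 : (25000/50913 : ℝ) < φ ^ (-((269 : ℝ)/182)) := by
    rw [Real.rpow_neg hφ0.le]
    have h := (inv_lt_inv₀ (by norm_num : (0:ℝ) < 50913/25000)
      (Real.rpow_pos_of_pos hφ0 _)).2 hE1
    have he : (25000/50913 : ℝ) = (50913/25000 : ℝ)⁻¹ := by norm_num
    rw [he]
    exact h
  have ht2 : φ ^ (-((1051 : ℝ)/711)) < (400000/814677 : ℝ) := by
    rw [Real.rpow_neg hφ0.le]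
    have h := (inv_lt_inv₀ (Real.rpow_pos_of_pos hφ0 _)
      (by norm_num : (0:ℝ) < 814677/400000)).2 hE2
    have he : (400000/814677 : ℝ) = (814677/400000 : ℝ)⁻¹ := by norm_num
    rw [he]
    exact h
  clear hp1 hp2 hp4 hp8 hp16 hp32 hp33 hp66 hp67 hp134 hp268 hp269 hp64 hp65 hp130 hp131 hp262 hp524 hp525 hp1050 hp1051 hE1 hE2
  -- rewrite body
  have hsq2 : ∀ D : ℝ, φ ^ (-(2 * D)) = (φ ^ (-D)) ^ 2 := by
    intro D
    rw [show -(2 * D) = (-D) + (-D) by ring, Real.rpow_add hφ0]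
    ring
  have hbody : ∀ D : ℝ, l * ((l - 2) * φ ^ (-D) + ((l ^ 2 - 4) / l ^ 2) * φ ^ (-(2 * D)) +
      ((l - 2) / l) * φ ^ (-D)) =
      (l^2*(l-2) * φ ^ (-D) + (l^2-4) * (φ ^ (-D))^2 + l*(l-2) * φ ^ (-D)) / l := by
    intro D
    rw [hsq2 D]
    field_simp
  simp only [hbody, div_eq_iff (ne_of_gt hl0), one_mul]
  -- coefficient bounds
  have b1 : (28464323/10000000 : ℝ) < l^2*(l-2) := by nlinarith [hl1, hl2, sq_nonneg (l - 2.46750385)]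
  have b2 : (2610719/1250000 : ℝ) < l^2-4 := by nlinarith [hl1, hl2]
  have b3 : (461427/400000 : ℝ) < l*(l-2) := by nlinarith [hl1, hl2]
  have u1 : l^2*(l-2) < (1138573/400000 : ℝ) := by nlinarith [hl1, hl2, sq_nonneg (l - 2.46750386)]
  have u2 : l^2-4 < (20885753/10000000 : ℝ) := by nlinarith [hl1, hl2]
  have u3 : l*(l-2) < (2883919/2500000 : ℝ) := by nlinarith [hl1, hl2]
  have htpos : ∀ D : ℝ, 0 < φ ^ (-D) := fun D => Real.rpow_pos_of_pos hφ0 _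
  -- endpoint inequalities
  have hlow : l < l^2*(l-2) * φ ^ (-((269 : ℝ)/182)) + (l^2-4) * (φ ^ (-((269 : ℝ)/182)))^2 +
      l*(l-2) * φ ^ (-((269 : ℝ)/182)) := by
    set t := φ ^ (-((269 : ℝ)/182)) with hts
    have htp : (0:ℝ) < t := htpos _
    have k1 : (28464323/10000000 : ℝ) * t < l^2*(l-2) * t := (mul_lt_mul_iff_of_pos_right htp).2 b1
    have k2 : (2610719/1250000 : ℝ) * t^2 < (l^2-4) * t^2 := (mul_lt_mul_iff_of_pos_right (pow_pos htp 2)).2 b2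
    have k3 : (461427/400000 : ℝ) * t < l*(l-2) * t := (mul_lt_mul_iff_of_pos_right htp).2 b3
    have k4 : (25000/50913 : ℝ)^2 < t^2 := by nlinarith [ht1]
    nlinarith [k1, k2, k3, k4, ht1, hl2]
  have hup : l^2*(l-2) * φ ^ (-((1051 : ℝ)/711)) + (l^2-4) * (φ ^ (-((1051 : ℝ)/711)))^2 +
      l*(l-2) * φ ^ (-((1051 : ℝ)/711)) < l := by
    set t := φ ^ (-((1051 : ℝ)/711)) with hts
    have htp : (0:ℝ) < t := htpos _
    have k1 : l^2*(l-2) * t < (1138573/400000 : ℝ) * t := (mul_lt_mul_iff_of_pos_right htp).2 u1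
    have k2 : (l^2-4) * t^2 < (20885753/10000000 : ℝ) * t^2 := (mul_lt_mul_iff_of_pos_right (pow_pos htp 2)).2 u2
    have k3 : l*(l-2) * t < (2883919/2500000 : ℝ) * t := (mul_lt_mul_iff_of_pos_right htp).2 u3
    have k4 : t^2 < (400000/814677 : ℝ)^2 := by nlinarith [ht2, htp]
    nlinarith [k1, k2, k3, k4, ht2, hl1, htp]
  -- strict antitonicity
  have hanti : ∀ a b : ℝ, a < b →
      l^2*(l-2) * φ ^ (-b) + (l^2-4) * (φ ^ (-b))^2 + l*(l-2) * φ ^ (-b) <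
      l^2*(l-2) * φ ^ (-a) + (l^2-4) * (φ ^ (-a))^2 + l*(l-2) * φ ^ (-a) := by
    intro a b hab
    have hts : φ ^ (-b) < φ ^ (-a) :=
      (Real.rpow_lt_rpow_left_iff hφ1).2 (by linarith)
    have htp : (0:ℝ) < φ ^ (-b) := htpos _
    have c1 : (0:ℝ) < l^2*(l-2) := by nlinarith [hl1]
    have c2 : (0:ℝ) < l^2-4 := by nlinarith [hl1]
    have c3 : (0:ℝ) < l*(l-2) := by nlinarith [hl1]
    nlinarith [mul_pos c1 (sub_pos.2 hts), mul_pos c3 (sub_pos.2 hts),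
      mul_pos c2 (mul_pos (sub_pos.2 hts) (by linarith : (0:ℝ) < φ ^ (-a) + φ ^ (-b)))]
  -- continuity
  have hrc : Continuous fun D : ℝ => φ ^ (-D) := by
    have he : (fun D : ℝ => φ ^ (-D)) = fun D : ℝ => Real.exp (Real.log φ * (-D)) := by
      funext D
      exact Real.rpow_def_of_pos hφ0 _
    rw [he]
    exact Real.continuous_exp.comp (continuous_const.mul continuous_neg)
  have hcont : Continuous fun D : ℝ =>
      l^2*(l-2) * φ ^ (-D) + (l^2-4) * (φ ^ (-D))^2 + l*(l-2) * φ ^ (-D) :=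
    ((continuous_const.mul hrc).add (continuous_const.mul (hrc.pow 2))).add
      (continuous_const.mul hrc)
  -- IVT
  have hEE : (269/182 : ℝ) ≤ 1051/711 := by norm_num
  obtain ⟨D, hDmem, hDeq⟩ :=
    intermediate_value_Icc' hEE hcont.continuousOn
      (Set.mem_Icc.2 ⟨le_of_lt hup, le_of_lt hlow⟩)
  simp only [Set.mem_Icc] at hDmem
  have hDeq' : l^2*(l-2) * φ ^ (-D) + (l^2-4) * (φ ^ (-D))^2 + l*(l-2) * φ ^ (-D) = l := hDeq
  have hbnd : ∀ y : ℝ,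
      l^2*(l-2) * φ ^ (-y) + (l^2-4) * (φ ^ (-y))^2 + l*(l-2) * φ ^ (-y) = l →
      (269/182 : ℝ) < y ∧ y < (1051/711 : ℝ) := by
    intro y hy
    constructor
    · by_contra h
      push_neg at h
      rcases eq_or_lt_of_le h with he | hlt
      · rw [he] at hy; linarith [hlow]
      · have := hanti y (269/182) hlt; linarith [hlow]
    · by_contra h
      push_neg at h
      rcases eq_or_lt_of_le h with he | hlt
      · rw [← he] at hy; linarith [hup]
      · have := hanti (1051/711) y hlt; linarith [hup]
    
  constructor
  · refine ⟨D, ⟨by linarith [hDmem.1, show (0:ℝ) < 269/182 by norm_num], hDeq'⟩, ?_⟩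
    intro y hy
    rcases lt_trichotomy y D with h | h | h
    · exfalso; have := hanti y D h; rw [hy.2, hDeq'] at this; linarith
    · exact h
    · exfalso; have := hanti D y h; rw [hy.2, hDeq'] at this; linarith
  · intro y hy0 hy
    obtain ⟨h1, h2⟩ := hbnd y hy
    constructor
    · calc (1.478 : ℝ) < 269/182 := by norm_num
        _ < y := h1
    · calc y < 1051/711 := h2
        _ < 1.4782 := by norm_num
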